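/- For μ > -1, the weighted expectation E[ (X^T X) · log(1 - X^T X) ] where X has the n-dimensional Pearson type II density f_{II}(x;μ) = (Γ(n/2 + μ + 1)/(π^{n/2} Γ(μ+1))) (1 - x^T x)^μ on the unit ball equals (n/(2μ + n + 2)) · (Ψ(μ+1) - Ψ(μ + n/2 + 2)), where Ψ is the digamma function. -/

import Mathlib

open MeasureTheory
open Set intervalIntegral

/-- The digamma function Ψ(t) = d/dt log Γ(t). -/
noncomputable def digamma (t : ℝ) : ℝ := deriv (fun s => Real.log (Real.Gamma s)) t

lemma betaInteg {a b : ℝ} (ha : 0 < a) (hb : 0 < b) :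
    IntervalIntegrable (fun t : ℝ => t ^ (a - 1) * (1 - t) ^ (b - 1)) volume 0 1 := by
  have key : ∀ {u v : ℝ}, 0 < u → 0 < v →
      IntervalIntegrable (fun t : ℝ => t ^ (u - 1) * (1 - t) ^ (v - 1)) volume 0 (1/2 : ℝ) := by
    intro u v hu hv
    apply (intervalIntegral.intervalIntegrable_rpow' (by linarith : (-1:ℝ) < u - 1)).mul_continuousOn
    apply continuousOn_of_forall_continuousAt
    intro t ht
    rw [Set.uIcc_of_le (by norm_num)] at ht
    have : (1:ℝ) - t ≠ 0 := by
      have := ht.2; intro h; nlinarith [ht.1]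
    exact (Real.continuousAt_rpow_const _ _ (Or.inl this)).comp
      ((continuous_const.sub continuous_id).continuousAt)
  have c1 := key ha hb
  have c2' := (key hb ha).comp_sub_left 1
  norm_num at c2'
  have c2 : IntervalIntegrable (fun t : ℝ => t ^ (a - 1) * (1 - t) ^ (b - 1)) volume (1/2) 1 := by
    apply c2'.symm.congr
    exact fun t _ => mul_comm _ _
  exact c1.trans c2

lemma betaVal {a b : ℝ} (ha : 0 < a) (hb : 0 < b) :
    ∫ t in (0:ℝ)..1, t ^ (a - 1) * (1 - t) ^ (b - 1)
      = Real.Gamma a * Real.Gamma b / Real.Gamma (a + b) := by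
  have h := Complex.Gamma_mul_Gamma_eq_betaIntegral
    (s := (a:ℂ)) (t := (b:ℂ)) (by simpa using ha) (by simpa using hb)
  have hB : Complex.betaIntegral (a:ℂ) (b:ℂ)
      = ((∫ t in (0:ℝ)..1, t ^ (a - 1) * (1 - t) ^ (b - 1) : ℝ) : ℂ) := by
    rw [Complex.betaIntegral, ← intervalIntegral.integral_ofReal]
    apply intervalIntegral.integral_congr
    intro t ht
    rw [Set.uIcc_of_le (by norm_num : (0:ℝ) ≤ 1)] at ht
    simp only
    rw [Complex.ofReal_mul, Complex.ofReal_cpow ht.1,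
      Complex.ofReal_cpow (by linarith [ht.2] : (0:ℝ) ≤ 1 - t)]
    push_cast
    ring
  rw [hB, ← Complex.ofReal_add, Complex.Gamma_ofReal, Complex.Gamma_ofReal,
    Complex.Gamma_ofReal] at h
  have hab : Real.Gamma (a + b) ≠ 0 := (Real.Gamma_pos_of_pos (by linarith)).ne'
  have : Real.Gamma a * Real.Gamma b
      = Real.Gamma (a + b) * ∫ t in (0:ℝ)..1, t ^ (a - 1) * (1 - t) ^ (b - 1) := by
    exact_mod_cast h
  field_simp [this]
  rw [this]; ring

lemma hasDerivAt_Gamma_digamma {t : ℝ} (ht : 0 < t) :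
    HasDerivAt Real.Gamma (Real.Gamma t * digamma t) t := by
  have hne : ∀ m : ℕ, t ≠ -m := fun m h => by
    have : (0:ℝ) ≤ m := Nat.cast_nonneg m
    nlinarith [h ▸ ht]
  have hd := (Real.differentiableAt_Gamma hne).hasDerivAt
  have hpos := Real.Gamma_pos_of_pos ht
  have hlog : HasDerivAt (fun s => Real.log (Real.Gamma s))
      (deriv Real.Gamma t / Real.Gamma t) t := hd.log hpos.ne'
  have : digamma t = deriv Real.Gamma t / Real.Gamma t := hlog.deriv
  rw [this, mul_div_cancel₀ _ hpos.ne']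
  exact hd

lemma betaLog {a b : ℝ} (ha : 0 < a) (hb : 0 < b) :
    ∫ t in (0:ℝ)..1, t ^ (a - 1) * ((1 - t) ^ (b - 1) * Real.log (1 - t))
      = Real.Gamma a * Real.Gamma b / Real.Gamma (a + b) * (digamma b - digamma (a + b)) := by
  set F : ℝ → ℝ → ℝ := fun x t => t ^ (a - 1) * (1 - t) ^ (x - 1) with hF
  set F' : ℝ → ℝ → ℝ := fun x t => t ^ (a - 1) * ((1 - t) ^ (x - 1) * Real.log (1 - t)) with hF'
  have hε : (0:ℝ) < b / 4 := by linarith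
  have hne1 : ∀ᵐ t : ℝ ∂volume, t ≠ 1 := by
    refine ae_iff.2 ?_
    simp only [not_not, Set.setOf_eq_eq_singleton]
    exact measure_singleton 1
  have hmemIoo : ∀ {t : ℝ}, t ∈ Set.uIoc (0:ℝ) 1 → t ≠ 1 → 0 < t ∧ t < 1 := by
    intro t ht ht1
    rw [Set.uIoc_of_le zero_le_one] at ht
    exact ⟨ht.1, lt_of_le_of_ne ht.2 ht1⟩
  have key := intervalIntegral.hasDerivAt_integral_of_dominated_loc_of_deriv_le
    (F := F) (F' := F') (x₀ := b) (a := 0) (b := 1) (μ := volume)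
    (bound := fun t => (4 / b) * (t ^ (a - 1) * (1 - t) ^ (b / 4 - 1))) (Metric.ball_mem_nhds b hε)
    ?_ ?_ ?_ ?_ ?_ ?_
  · -- use key to conclude
    have hG : HasDerivAt (fun x => ∫ t in (0:ℝ)..1, F x t)
        (∫ t in (0:ℝ)..1, F' b t) b := key.2
    -- the function coincides with Gamma quotient near b
    have hEq : (fun x => ∫ t in (0:ℝ)..1, F x t)
        =ᶠ[nhds b] fun x => Real.Gamma a * Real.Gamma x / Real.Gamma (a + x) := by
      filter_upwards [isOpen_Ioi.mem_nhds (Set.mem_Ioi.2 hb)] with x hx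
      exact betaVal ha hx
    have hG2 : HasDerivAt (fun x => Real.Gamma a * Real.Gamma x / Real.Gamma (a + x))
        (∫ t in (0:ℝ)..1, F' b t) b := hG.congr_of_eventuallyEq hEq.symm
    have hb' : 0 < a + b := by linarith
    have hΓb := hasDerivAt_Gamma_digamma hb
    have hΓab : HasDerivAt (fun x => Real.Gamma (a + x))
        (Real.Gamma (a + b) * digamma (a + b)) b := by
      have := (hasDerivAt_Gamma_digamma hb').comp b ((hasDerivAt_id b).const_add a)
      simpa [Function.comp_def] using this
    have hprod : HasDerivAt (fun x => Real.Gamma a * Real.Gamma x / Real.Gamma (a + x))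
        ((Real.Gamma a * (Real.Gamma b * digamma b) * Real.Gamma (a + b)
          - Real.Gamma a * Real.Gamma b * (Real.Gamma (a + b) * digamma (a + b)))
            / Real.Gamma (a + b) ^ 2) b :=
      (hΓb.const_mul (Real.Gamma a)).div hΓab (Real.Gamma_pos_of_pos hb').ne'
    have := hG2.unique hprod
    rw [this]
    have hΓab0 : Real.Gamma (a + b) ≠ 0 := (Real.Gamma_pos_of_pos hb').ne'
    field_simp
  · -- hF_meas
    filter_upwards with x
    exact ((by fun_prop : Measurable fun t : ℝ => t ^ (a-1) * (1-t) ^ (x-1))).aestronglyMeasurable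
  · -- hF_int
    exact betaInteg ha hb
  · -- hF'_meas
    refine Measurable.aestronglyMeasurable ?_
    exact Measurable.mul (by fun_prop)
      (Measurable.mul (by fun_prop) (Real.measurable_log.comp (by fun_prop)))
  · -- h_bound
    filter_upwards [hne1] with t ht1 htI x hx
    obtain ⟨ht0, htl⟩ := hmemIoo htI ht1
    have h1t : 0 < 1 - t := by linarith
    have h1t1 : 1 - t ≤ 1 := by linarith
    have hxb : b / 2 - 1 ≤ x - 1 := by
      have := Metric.mem_ball.1 hx
      have := abs_lt.1 this
      linarith [this.1]
    have hta : (0:ℝ) < t ^ (a - 1) := Real.rpow_pos_of_pos ht0 _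
    have h₁ : (1 - t) ^ (x - 1) ≤ (1 - t) ^ (b / 2 - 1) :=
      Real.rpow_le_rpow_of_exponent_ge h1t h1t1 hxb
    have hlog : |Real.log (1 - t)| ≤ (4 / b) * (1 - t) ^ (-(b / 4)) := by
      have hlognp : Real.log (1 - t) ≤ 0 := Real.log_nonpos h1t.le h1t1
      rw [abs_of_nonpos hlognp]
      have h2 : Real.log ((1 - t) ^ (-(b / 4))) ≤ (1 - t) ^ (-(b / 4)) := by
        have := Real.log_le_sub_one_of_pos (Real.rpow_pos_of_pos h1t (-(b/4)))
        linarith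
      rw [Real.log_rpow h1t] at h2
      have h3 := mul_le_mul_of_nonneg_left h2 (show (0:ℝ) ≤ 4 / b by positivity)
      have hid : 4 / b * (-(b / 4) * Real.log (1 - t)) = -Real.log (1 - t) := by
        field_simp
      linarith
    have hnorm : ‖F' x t‖ = t ^ (a - 1) * ((1 - t) ^ (x - 1) * |Real.log (1 - t)|) := by
      rw [hF']
      simp only [Real.norm_eq_abs]
      rw [abs_mul, abs_mul, abs_of_pos hta, abs_of_pos (Real.rpow_pos_of_pos h1t _)]
    rw [hnorm]
    have step : (1 - t) ^ (x - 1) * |Real.log (1 - t)|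
        ≤ (1 - t) ^ (b / 2 - 1) * ((4 / b) * (1 - t) ^ (-(b / 4))) := by
      apply mul_le_mul h₁ hlog (abs_nonneg _) (Real.rpow_nonneg h1t.le _)
    calc t ^ (a - 1) * ((1 - t) ^ (x - 1) * |Real.log (1 - t)|)
        ≤ t ^ (a - 1) * ((1 - t) ^ (b / 2 - 1) * ((4 / b) * (1 - t) ^ (-(b / 4)))) := by
          exact mul_le_mul_of_nonneg_left step hta.le
      _ = (4 / b) * (t ^ (a - 1) * ((1 - t) ^ (b / 2 - 1) * (1 - t) ^ (-(b / 4)))) := by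
          ring
      _ = (4 / b) * (t ^ (a - 1) * (1 - t) ^ (b / 4 - 1)) := by
          rw [← Real.rpow_add h1t]
          norm_num
          left; left
          congr 1
          ring
  · -- bound integrable
    exact (betaInteg ha hε).const_mul _
  · -- h_diff
    filter_upwards [hne1] with t ht1 htI x hx
    obtain ⟨ht0, htl⟩ := hmemIoo htI ht1
    have h1t : 0 < 1 - t := by linarith
    have hrp : HasDerivAt (fun y : ℝ => (1 - t) ^ (y - 1))
        ((1 - t) ^ (x - 1) * Real.log (1 - t)) x := by
      have h0 := (Real.hasStrictDerivAt_const_rpow h1t (x - 1)).hasDerivAt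
      have := h0.comp x ((hasDerivAt_id x).sub_const 1)
      simpa [Function.comp_def] using this
    simpa [hF, hF', mul_comm, mul_assoc, mul_left_comm] using hrp.const_mul (t ^ (a - 1))


lemma radialReduce (n : ℕ) (hn : 0 < n) (H : ℝ → ℝ) :
    (∫ r in Ioi (0:ℝ), r ^ (n - 1 : ℕ) • (if r ≤ 1 then H (r ^ 2) else 0))
      = ∫ t in (0:ℝ)..1, (1/2 : ℝ) * (t ^ ((n:ℝ)/2 - 1) * H t) := by
  set f : ℝ → ℝ := Set.indicator (Ioc 0 1) (fun t => (1/2 : ℝ) * (t ^ ((n:ℝ)/2 - 1) * H t))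
    with hf
  have hcomp := integral_comp_rpow_Ioi_of_pos (g := f) (p := 2) two_pos
  have hLHS : (∫ x in Ioi (0:ℝ), (2 * x ^ ((2:ℝ) - 1)) • f (x ^ (2:ℝ)))
      = ∫ r in Ioi (0:ℝ), r ^ (n - 1 : ℕ) • (if r ≤ 1 then H (r ^ 2) else 0) := by
    apply setIntegral_congr_fun measurableSet_Ioi
    intro x hx
    have hx0 : (0:ℝ) < x := hx
    have hx2 : x ^ (2:ℝ) = x ^ 2 := Real.rpow_two x
    have hx1 : x ^ ((2:ℝ) - 1) = x := by norm_num
    simp only [smul_eq_mul]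
    rw [hx2, hx1]
    by_cases hle : x ≤ 1
    · have hmem : x ^ 2 ∈ Ioc (0:ℝ) 1 := ⟨by positivity, by nlinarith⟩
      rw [hf, Set.indicator_of_mem hmem, if_pos hle]
      have e1 : (x ^ 2 : ℝ) ^ ((n:ℝ)/2 - 1) = x ^ ((n:ℝ) - 2) := by
        rw [← hx2, ← Real.rpow_mul hx0.le]
        congr 1
        ring
      have e2 : x * x ^ ((n:ℝ) - 2) = x ^ (n - 1 : ℕ) := by
        rw [← Real.rpow_natCast x (n-1), Nat.cast_sub hn, Nat.cast_one]
        nth_rewrite 1 [← Real.rpow_one x]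
        rw [← Real.rpow_add hx0]
        congr 1
        ring
      calc 2 * x * (1/2 * ((x^2 : ℝ) ^ ((n:ℝ)/2 - 1) * H (x ^ 2)))
          = x * x ^ ((n:ℝ) - 2) * H (x ^ 2) := by rw [e1]; ring
        _ = x ^ (n - 1 : ℕ) * H (x ^ 2) := by rw [e2]
    · have hnm : x ^ 2 ∉ Ioc (0:ℝ) 1 := by
        intro h
        exact absurd h.2 (by push_neg; nlinarith [hx0, not_le.1 hle])
      rw [hf, Set.indicator_of_notMem hnm, if_neg hle]
      simp
  have hRHS : (∫ y in Ioi (0:ℝ), f y)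
      = ∫ t in (0:ℝ)..1, (1/2 : ℝ) * (t ^ ((n:ℝ)/2 - 1) * H t) := by
    rw [hf, MeasureTheory.setIntegral_indicator measurableSet_Ioc,
      Set.inter_eq_right.2 Set.Ioc_subset_Ioi_self,
      intervalIntegral.integral_of_le zero_le_one]
  rw [← hLHS, hcomp, hRHS]

lemma ballReduce (n : ℕ) (hn : 0 < n) (H : ℝ → ℝ) :
    (∫ x in {x : Fin n → ℝ | ∑ i, x i ^ 2 ≤ 1}, H (∑ i, x i ^ 2))
      = ((n : ℝ) * (Real.pi ^ ((n:ℝ)/2) / Real.Gamma ((n:ℝ)/2 + 1)))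
          * ∫ t in (0:ℝ)..1, (1/2 : ℝ) * (t ^ ((n:ℝ)/2 - 1) * H t) := by
  classical
  haveI : Nonempty (Fin n) := ⟨⟨0, hn⟩⟩
  set E := EuclideanSpace ℝ (Fin n) with hE
  set e := (MeasurableEquiv.toLp 2 (Fin n → ℝ)).symm with he
  have hmp := EuclideanSpace.volume_preserving_symm_measurableEquiv_toLp (Fin n)
  set S : Set (Fin n → ℝ) := {x | ∑ i, x i ^ 2 ≤ 1} with hS
  set g : (Fin n → ℝ) → ℝ := fun x => H (∑ i, x i ^ 2) with hg
  have hey : ∀ y : E, (∑ i, (e y) i ^ 2) = ∑ i, y i ^ 2 := by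
    intro y
    simp [he]
  have hsum : ∀ y : E, ∑ i, y i ^ 2 = ‖y‖ ^ 2 := by
    intro y
    rw [EuclideanSpace.norm_eq, Real.sq_sqrt (by positivity)]
    simp [Real.norm_eq_abs, sq_abs]
  have step1 : ∫ x in S, g x = ∫ y in e ⁻¹' S, g (e y) :=
    (hmp.setIntegral_preimage_emb e.measurableEmbedding g S).symm
  have hpre : e ⁻¹' S = Metric.closedBall (0 : E) 1 := by
    ext y
    simp only [Set.mem_preimage, Metric.mem_closedBall, dist_zero_right, hS, Set.mem_setOf_eq]
    rw [hey y, hsum y]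
    exact ⟨fun h => (pow_le_one_iff_of_nonneg (norm_nonneg y) two_ne_zero).1 h,
      fun h => by nlinarith [norm_nonneg y]⟩
  set G : ℝ → ℝ := fun r => if r ≤ 1 then H (r ^ 2) else 0 with hG
  have step2 : ∫ y in e ⁻¹' S, g (e y) = ∫ y : E, G ‖y‖ := by
    rw [hpre, ← MeasureTheory.integral_indicator measurableSet_closedBall]
    congr 1
    funext y
    by_cases h : ‖y‖ ≤ 1
    · rw [Set.indicator_of_mem (by simpa [Metric.mem_closedBall] using h), hG]
      simp only [hg, hey y, hsum y, if_pos h]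
    · rw [Set.indicator_of_notMem (by simpa [Metric.mem_closedBall] using h), hG]
      simp [if_neg h]
  have step3 := MeasureTheory.integral_fun_norm_addHaar (volume : Measure E) G
  have hdim : Module.finrank ℝ E = n := finrank_euclideanSpace_fin
  have hvol : ((volume (Metric.ball (0:E) 1)).toReal)
      = Real.pi ^ ((n:ℝ)/2) / Real.Gamma ((n:ℝ)/2 + 1) := by
    rw [EuclideanSpace.volume_ball]
    simp only [Fintype.card_fin, ENNReal.ofReal_one, one_pow, one_mul]
    rw [ENNReal.toReal_ofReal (by positivity)]
    have hπ : Real.sqrt Real.pi ^ n = Real.pi ^ ((n:ℝ)/2) := by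
      rw [Real.sqrt_eq_rpow, ← Real.rpow_natCast (Real.pi ^ ((1:ℝ)/2)) n,
        ← Real.rpow_mul Real.pi_pos.le]
      ring_nf
    rw [hπ]
  have hrad : (∫ r in Ioi (0:ℝ), r ^ (n - 1 : ℕ) • G r)
      = ∫ t in (0:ℝ)..1, (1/2 : ℝ) * (t ^ ((n:ℝ)/2 - 1) * H t) := radialReduce n hn H
  rw [step1, step2, step3, hdim, measureReal_def, hvol, hrad, nsmul_eq_mul, smul_eq_mul]
  ring


/-- E[(XᵀX)·log(1-XᵀX)] for the Pearson type II density equals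
(n/(2μ+n+2))·(Ψ(μ+1) - Ψ(μ+n/2+2)). -/
theorem stmt_7 (n : ℕ) (hn : 0 < n) (μ : ℝ) (hμ : -1 < μ) :
    (∫ x in {x : Fin n → ℝ | ∑ i, x i ^ 2 ≤ 1},
        (Real.Gamma ((n : ℝ) / 2 + μ + 1) / (Real.pi ^ ((n : ℝ) / 2) * Real.Gamma (μ + 1)))
          * (1 - ∑ i, x i ^ 2) ^ μ
          * ((∑ i, x i ^ 2) * Real.log (1 - ∑ i, x i ^ 2)))
      = ((n : ℝ) / (2 * μ + n + 2)) * (digamma (μ + 1) - digamma (μ + n / 2 + 2)) := by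
  have hn' : (0:ℝ) < n := by exact_mod_cast hn
  have hn1 : (1:ℝ) ≤ n := by exact_mod_cast hn
  set C : ℝ := Real.Gamma ((n : ℝ) / 2 + μ + 1) / (Real.pi ^ ((n : ℝ) / 2) * Real.Gamma (μ + 1))
    with hC
  set H : ℝ → ℝ := fun s => C * (1 - s) ^ μ * (s * Real.log (1 - s)) with hH
  have key : (∫ x in {x : Fin n → ℝ | ∑ i, x i ^ 2 ≤ 1},
        C * (1 - ∑ i, x i ^ 2) ^ μ * ((∑ i, x i ^ 2) * Real.log (1 - ∑ i, x i ^ 2)))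
      = ((n : ℝ) * (Real.pi ^ ((n:ℝ)/2) / Real.Gamma ((n:ℝ)/2 + 1)))
          * ∫ t in (0:ℝ)..1, (1/2 : ℝ) * (t ^ ((n:ℝ)/2 - 1) * H t) := ballReduce n hn H
  have ha : (0:ℝ) < (n:ℝ)/2 + 1 := by linarith
  have hb : (0:ℝ) < μ + 1 := by linarith
  have hBL := betaLog ha hb
  have hne0 : ∀ᵐ t : ℝ ∂volume, t ≠ 0 := by
    refine ae_iff.2 ?_
    simp only [not_not, Set.setOf_eq_eq_singleton]
    exact measure_singleton 0
  have h1 : (∫ t in (0:ℝ)..1, (1/2:ℝ) * (t ^ ((n:ℝ)/2 - 1) * H t))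
      = (1/2) * C * ∫ t in (0:ℝ)..1,
          t ^ (((n:ℝ)/2 + 1) - 1) * ((1 - t) ^ ((μ + 1) - 1) * Real.log (1 - t)) := by
    rw [← intervalIntegral.integral_const_mul]
    apply intervalIntegral.integral_congr_ae
    filter_upwards [hne0] with t ht0 htI
    rw [Set.uIoc_of_le zero_le_one] at htI
    have htp : 0 < t := lt_of_le_of_ne htI.1.le (Ne.symm ht0)
    have e : t ^ ((n:ℝ)/2 - 1) * t = t ^ ((n:ℝ)/2) := by
      nth_rewrite 2 [← Real.rpow_one t]
      rw [← Real.rpow_add htp]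
      norm_num
    rw [show (((n:ℝ)/2 + 1) - 1) = (n:ℝ)/2 from by ring,
      show ((μ + 1) - 1 : ℝ) = μ from by ring]
    calc (1/2:ℝ) * (t ^ ((n:ℝ)/2 - 1) * (C * (1 - t) ^ μ * (t * Real.log (1 - t))))
        = (1/2) * C * ((t ^ ((n:ℝ)/2 - 1) * t) * ((1 - t) ^ μ * Real.log (1 - t))) := by
          ring
      _ = (1/2) * C * (t ^ ((n:ℝ)/2) * ((1 - t) ^ μ * Real.log (1 - t))) := by rw [e]
  rw [key, h1, hBL]
  have harg : ((n:ℝ)/2 + 1 + (μ + 1)) = μ + (n:ℝ)/2 + 2 := by ring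
  rw [harg]
  have hpos1 : (0:ℝ) < (n:ℝ)/2 + μ + 1 := by linarith
  have hΓrec : Real.Gamma (μ + (n:ℝ)/2 + 2)
      = ((n:ℝ)/2 + μ + 1) * Real.Gamma ((n:ℝ)/2 + μ + 1) := by
    rw [show μ + (n:ℝ)/2 + 2 = ((n:ℝ)/2 + μ + 1) + 1 from by ring,
      Real.Gamma_add_one hpos1.ne']
  rw [hΓrec, hC]
  have hΓ1 : (0:ℝ) < Real.Gamma ((n:ℝ)/2 + 1) := Real.Gamma_pos_of_pos ha
  have hΓ2 : (0:ℝ) < Real.Gamma (μ + 1) := Real.Gamma_pos_of_pos hb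
  have hΓ3 : (0:ℝ) < Real.Gamma ((n:ℝ)/2 + μ + 1) := Real.Gamma_pos_of_pos hpos1
  have hπ : (0:ℝ) < Real.pi ^ ((n:ℝ)/2) := Real.rpow_pos_of_pos Real.pi_pos _
  have hden : (2*μ + (n:ℝ) + 2) ≠ 0 := by nlinarith
  have hcoef : (n:ℝ) * (Real.pi ^ ((n:ℝ)/2) / Real.Gamma ((n:ℝ)/2 + 1)) *
      ((1/2) * (Real.Gamma ((n:ℝ)/2 + μ + 1) / (Real.pi ^ ((n:ℝ)/2) * Real.Gamma (μ + 1))) *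
        (Real.Gamma ((n:ℝ)/2 + 1) * Real.Gamma (μ + 1)
          / (((n:ℝ)/2 + μ + 1) * Real.Gamma ((n:ℝ)/2 + μ + 1))))
      = (n:ℝ) / (2 * μ + (n:ℝ) + 2) := by
    have h2 : (2:ℝ) * μ + (n:ℝ) + 2 = 2 * ((n:ℝ)/2 + μ + 1) := by ring
    rw [h2]
    have hq := hpos1
    generalize hgen : (n:ℝ)/2 + μ + 1 = q at hq ⊢
    have hΓq : (0:ℝ) < Real.Gamma q := Real.Gamma_pos_of_pos hq
    field_simp
  linear_combination (digamma (μ + 1) - digamma (μ + (n:ℝ)/2 + 2)) * hcoef
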